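/- For every even integer n ≥ 2, the quotient of ℤ × ℤ × ℤ by the subgroup generated by (−2n², n(n+1), n(n−1)) and (10, 0, 0) is isomorphic as an abelian group to ℤ/nℤ × ℤ/10ℤ × ℤ. -/

import Mathlib

/-- The unimodular change of basis of `ℤ³` sending the standard basis to
`(-2N, N+1, N-1)`, `(1,0,0)`, `(0, c, c-1)`, where `N = 2c`. -/
def stmt8Equiv (N c : ℤ) (h : N = 2 * c) : (ℤ × ℤ × ℤ) ≃+ (ℤ × ℤ × ℤ) where
  toFun p := (-2 * N * p.1 + p.2.1, (N + 1) * p.1 + c * p.2.2, (N - 1) * p.1 + (c - 1) * p.2.2)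
  invFun p := (-(c - 1) * p.2.1 + c * p.2.2,
    p.1 - 2 * N * (c - 1) * p.2.1 + 2 * N * c * p.2.2,
    (N - 1) * p.2.1 - (N + 1) * p.2.2)
  left_inv := by
    rintro ⟨x, y, z⟩
    refine Prod.ext ?_ (Prod.ext ?_ ?_) <;> simp only
    · linear_combination x * h
    · linear_combination 2 * N * x * h
    · linear_combination z * h
  right_inv := by
    rintro ⟨a, b, d⟩
    refine Prod.ext ?_ (Prod.ext ?_ ?_) <;> simp only
    · ring
    · linear_combination b * h
    · linear_combination d * h
  map_add' := by
    rintro ⟨x, y, z⟩ ⟨x', y', z'⟩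
    refine Prod.ext ?_ (Prod.ext ?_ ?_) <;> simp only [Prod.fst_add, Prod.snd_add] <;> ring

/-- For every even `n ≥ 2`, the quotient of `ℤ × ℤ × ℤ` by the subgroup generated by
`(-2n², n(n+1), n(n-1))` and `(10, 0, 0)` is isomorphic to `ℤ/nℤ × ℤ/10ℤ × ℤ`. -/
theorem stmt_8 (n : ℕ) (hn : 2 ≤ n) (hne : Even n) :
    Nonempty (((ℤ × ℤ × ℤ) ⧸ AddSubgroup.closure
        {(((-2 * (n : ℤ) ^ 2 : ℤ), ((n : ℤ) * ((n : ℤ) + 1) : ℤ),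
           ((n : ℤ) * ((n : ℤ) - 1) : ℤ)) : ℤ × ℤ × ℤ),
         (((10 : ℤ), (0 : ℤ), (0 : ℤ)) : ℤ × ℤ × ℤ)})
      ≃+ (ZMod n × ZMod 10 × ℤ)) := by
  obtain ⟨m, hm⟩ := hne
  have h : (n : ℤ) = 2 * (m : ℤ) := by push_cast [hm]; ring
  set N : ℤ := (n : ℤ) with hN
  set c : ℤ := (m : ℤ) with hc
  -- the change of basis
  let M : (ℤ × ℤ × ℤ) ≃+ (ℤ × ℤ × ℤ) := stmt8Equiv N c h
  -- the "diagonal" subgroup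
  set K : AddSubgroup (ℤ × ℤ × ℤ) :=
    AddSubgroup.closure {((N, 0, 0) : ℤ × ℤ × ℤ), ((0, 10, 0) : ℤ × ℤ × ℤ)} with hK
  -- the projection homomorphism
  let ψ : (ℤ × ℤ × ℤ) →+ (ZMod n × ZMod 10 × ℤ) :=
    AddMonoidHom.mk' (fun p => ((p.1 : ZMod n), (p.2.1 : ZMod 10), p.2.2)) (by
      rintro ⟨x, y, z⟩ ⟨x', y', z'⟩
      simp [Prod.ext_iff])
  have hψsurj : Function.Surjective ψ := by
    rintro ⟨a, b, d⟩
    obtain ⟨x, hx⟩ := ZMod.intCast_surjective (n := n) a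
    obtain ⟨y, hy⟩ := ZMod.intCast_surjective (n := 10) b
    refine ⟨(x, y, d), ?_⟩
    show ((x : ZMod n), (y : ZMod 10), d) = (a, b, d)
    rw [hx, hy]
  have hker : K = ψ.ker := by
    apply le_antisymm
    · rw [hK, AddSubgroup.closure_le]
      rintro p (rfl | rfl)
      · simp [ψ, AddMonoidHom.mem_ker, Prod.ext_iff, ZMod.intCast_zmod_eq_zero_iff_dvd, hN]
      · simp [ψ, AddMonoidHom.mem_ker, Prod.ext_iff, ZMod.intCast_zmod_eq_zero_iff_dvd]
        decide
    · rintro ⟨a, b, d⟩ hp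
      simp [ψ, AddMonoidHom.mem_ker, Prod.ext_iff,
        ZMod.intCast_zmod_eq_zero_iff_dvd] at hp
      obtain ⟨⟨k, hk⟩, ⟨l, hl⟩, hd⟩ := hp
      have : ((a, b, d) : ℤ × ℤ × ℤ) = k • ((N, 0, 0) : ℤ × ℤ × ℤ) + l • ((0, 10, 0) : ℤ × ℤ × ℤ) := by
        simp [Prod.ext_iff, Prod.smul_def, smul_eq_mul, hk, hl, hd, hN, mul_comm]
      rw [this]
      exact add_mem (AddSubgroup.zsmul_mem _ (AddSubgroup.subset_closure (by simp)) k)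
        (AddSubgroup.zsmul_mem _ (AddSubgroup.subset_closure (by simp)) l)
  have hmap : K.map (M : (ℤ × ℤ × ℤ) →+ (ℤ × ℤ × ℤ)) =
      AddSubgroup.closure
        {(((-2 * (n : ℤ) ^ 2 : ℤ), ((n : ℤ) * ((n : ℤ) + 1) : ℤ),
           ((n : ℤ) * ((n : ℤ) - 1) : ℤ)) : ℤ × ℤ × ℤ),
         (((10 : ℤ), (0 : ℤ), (0 : ℤ)) : ℤ × ℤ × ℤ)} := by
    rw [hK, AddMonoidHom.map_closure, Set.image_insert_eq, Set.image_singleton]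
    congr 1
    have h1 : (M : (ℤ × ℤ × ℤ) →+ (ℤ × ℤ × ℤ)) (N, 0, 0) =
        ((-2 * (n : ℤ) ^ 2, (n : ℤ) * ((n : ℤ) + 1), (n : ℤ) * ((n : ℤ) - 1)) : ℤ × ℤ × ℤ) := by
      simp only [M, stmt8Equiv, AddEquiv.coe_toAddMonoidHom, AddEquiv.coe_mk, Equiv.coe_fn_mk]
      refine Prod.ext ?_ (Prod.ext ?_ ?_) <;> simp <;> ring
    have h2 : (M : (ℤ × ℤ × ℤ) →+ (ℤ × ℤ × ℤ)) (0, 10, 0) = ((10, 0, 0) : ℤ × ℤ × ℤ) := by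
      simp only [M, stmt8Equiv, AddEquiv.coe_toAddMonoidHom, AddEquiv.coe_mk, Equiv.coe_fn_mk]
      refine Prod.ext ?_ (Prod.ext ?_ ?_) <;> simp
    rw [h1, h2]
  exact ⟨((QuotientAddGroup.congr K _ M hmap).symm.trans
    (QuotientAddGroup.quotientAddEquivOfEq hker)).trans
    (QuotientAddGroup.quotientKerEquivOfSurjective ψ hψsurj)⟩
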